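/- The Mirimanoff set is not paradoxical: the theory consisting of BST together with the UC-instance ∃y∀x(x∈y ↔ wellfounded(x)) is satisfiable (has a model), hence non-trivial. -/

import Mathlib

open FirstOrder FirstOrder.Language

namespace SetParadox

/-- The language with a single binary relation symbol `∈`. -/
def L : Language := ⟨fun _ => Empty, fun n => match n with | 2 => Unit | _ => Empty⟩

/-- The membership relation symbol. -/
def memRel : L.Relations 2 := Unit.unit

/-- `memF t₁ t₂` is the atomic formula `t₁ ∈ t₂`. -/
def memF {n : ℕ} (t₁ t₂ : L.Term (Empty ⊕ Fin n)) : L.BoundedFormula Empty n :=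
  memRel.boundedFormula₂ t₁ t₂

/-- Extensionality: `∀y∀z(∀x(x∈y ↔ x∈z) → y=z)`. -/
def extAx : L.Sentence :=
  ∀' ∀' ((∀' (memF (&2) (&0) ⇔ memF (&2) (&1))) ⟹ ((&0) =' (&1)))

/-- Basic set theory: the theory whose only axiom is extensionality. -/
def BST : L.Theory := {extAx}

/-- The UC-instance `∃y∀x(x∈y ↔ φ(x))` determined by a formula `φ` with one free
variable `x` (so that `y` does not occur free in `φ`). -/
def UCinst (φ : L.BoundedFormula Empty 1) : L.Sentence :=
  ∃' ∀' (memF (&1) (&0) ⇔ φ.liftAt 1 0)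


/-- `transitive(x) := ∀y∀z((y∈z ∧ z∈x) → y∈x)`, with `x` the free variable `&0`. -/
def transitiveF : L.BoundedFormula Empty 1 :=
  ∀' ∀' ((memF (&1) (&2) ⊓ memF (&2) (&0)) ⟹ memF (&1) (&0))

/-- `wellordered(x)`: the elements of `x` are irreflexive, transitive, linear and
well-founded with respect to `∈`; `x` is the free variable `&0`. -/
def wellorderedF : L.BoundedFormula Empty 1 :=
  (∀' (memF (&1) (&0) ⟹ ∼(memF (&1) (&1)))) ⊓
  (∀' ∀' ∀' ((memF (&1) (&0) ⊓ memF (&2) (&0) ⊓ memF (&3) (&0)) ⟹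
      ((memF (&1) (&2) ⊓ memF (&2) (&3)) ⟹ memF (&1) (&3)))) ⊓
  (∀' ∀' ((memF (&1) (&0) ⊓ memF (&2) (&0)) ⟹
      (∼((&1) =' (&2)) ⟹ (memF (&1) (&2) ⊔ memF (&2) (&1))))) ⊓
  (∀' ((∀' (memF (&2) (&1) ⟹ memF (&2) (&0))) ⟹
      ((∃' (memF (&2) (&1))) ⟹
        (∃' (memF (&2) (&1) ⊓ ∀' (memF (&3) (&1) ⟹ ∼(memF (&3) (&2))))))))

/-- `wellfounded(x) := ∃y(transitive(y) ∧ wellordered(y) ∧ x ⊆ y)`,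
with `x` the free variable `&0`. -/
def wellfoundedF : L.BoundedFormula Empty 1 :=
  ∃' (transitiveF.liftAt 1 0 ⊓ wellorderedF.liftAt 1 0 ⊓
      (∀' (memF (&2) (&0) ⟹ memF (&2) (&1))))

/-- The Mirimanoff set is not paradoxical: `BST` plus the UC-instance
`∃y∀x(x∈y ↔ wellfounded(x))` is satisfiable, hence non-trivial. -/
inductive D where
  | nat : ℕ → D
  | c : D
  | bigM : D

instance : Nonempty D := ⟨D.c⟩

def dmem : D → D → Prop
  | .nat n, .nat m => n < m
  | .nat n, .c => n = 1
  | .nat _, .bigM => True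
  | .c, .bigM => True
  | _, _ => False

instance : L.Structure D where
  funMap := fun {_} f _ => Empty.elim f
  RelMap := fun {n} r v =>
    match n, r, v with
    | 2, _, v => dmem (v 0) (v 1)

@[simp] lemma relMap_eq (a b : D) : Structure.RelMap (L := L) (M := D) memRel ![a, b] ↔ dmem a b :=
  Iff.rfl

@[simp] lemma memF_realize {n : ℕ} (t₁ t₂ : L.Term (Empty ⊕ Fin n)) (v : Empty → D)
    (xs : Fin n → D) :
    (memF t₁ t₂).Realize v xs ↔ dmem (t₁.realize (Sum.elim v xs)) (t₂.realize (Sum.elim v xs)) := by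
  simp [memF, BoundedFormula.realize_rel₂]

def Trans' (x : D) : Prop := ∀ y z, dmem y z → dmem z x → dmem y x
def WO (x : D) : Prop :=
  (∀ a, dmem a x → ¬ dmem a a) ∧
  (∀ a b c, dmem a x → dmem b x → dmem c x → dmem a b → dmem b c → dmem a c) ∧
  (∀ a b, dmem a x → dmem b x → a ≠ b → dmem a b ∨ dmem b a) ∧
  (∀ s, (∀ u, dmem u s → dmem u x) → (∃ u, dmem u s) →
    ∃ m, dmem m s ∧ ∀ z, dmem z s → ¬ dmem z m)
def WF (x : D) : Prop := ∃ y, Trans' y ∧ WO y ∧ ∀ u, dmem u x → dmem u y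

lemma transitiveF_realize (v : Empty → D) (xs : Fin 1 → D) :
    transitiveF.Realize v xs ↔ Trans' (xs 0) := by
  simp [transitiveF, Trans', Fin.snoc]

lemma wellorderedF_realize (v : Empty → D) (xs : Fin 1 → D) :
    wellorderedF.Realize v xs ↔ WO (xs 0) := by
  simp only [wellorderedF, WO, BoundedFormula.realize_inf, BoundedFormula.realize_all,
    BoundedFormula.realize_imp, BoundedFormula.realize_not, BoundedFormula.realize_sup,
    BoundedFormula.realize_ex, BoundedFormula.realize_bdEqual, memF_realize, Term.realize_var,
    Sum.elim_inr]
  simp [Fin.snoc]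
  tauto

@[simp] lemma comp_snoc_eq (xs : Fin 1 → D) (y : D) :
    ((Fin.snoc xs y : Fin 2 → D) ∘ fun i : Fin 1 => if (i : ℕ) < 0 then i.castSucc else i.succ)
      = fun _ => y := by
  funext i; fin_cases i <;> simp [Fin.snoc]

lemma wellfoundedF_realize (v : Empty → D) (xs : Fin 1 → D) :
    wellfoundedF.Realize v xs ↔ WF (xs 0) := by
  simp only [wellfoundedF, WF, BoundedFormula.realize_ex, BoundedFormula.realize_inf,
    BoundedFormula.realize_all, BoundedFormula.realize_imp, memF_realize, Term.realize_var,
    Sum.elim_inr, BoundedFormula.realize_liftAt_one (Nat.zero_le 1), comp_snoc_eq,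
    transitiveF_realize, wellorderedF_realize]
  simp [Fin.snoc, and_assoc]


@[simp] lemma dmem_nat_nat {n m : ℕ} : dmem (D.nat n) (D.nat m) ↔ n < m := Iff.rfl
@[simp] lemma dmem_nat_c {n : ℕ} : dmem (D.nat n) D.c ↔ n = 1 := Iff.rfl
@[simp] lemma dmem_nat_M {n : ℕ} : dmem (D.nat n) D.bigM := trivial
@[simp] lemma dmem_c_M : dmem D.c D.bigM := trivial
@[simp] lemma not_dmem_c_nat {n : ℕ} : ¬ dmem D.c (D.nat n) := id
@[simp] lemma not_dmem_c_c : ¬ dmem D.c D.c := id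
@[simp] lemma not_dmem_M_any {x : D} : ¬ dmem D.bigM x := by cases x <;> exact id

lemma mem_nat_cases {u : D} {k : ℕ} (h : dmem u (D.nat k)) : ∃ j, u = D.nat j ∧ j < k := by
  cases u with
  | nat j => exact ⟨j, rfl, h⟩
  | c => exact absurd h not_dmem_c_nat
  | bigM => exact absurd h not_dmem_M_any

lemma trans_nat (k : ℕ) : Trans' (D.nat k) := by
  intro y z hyz hzk
  obtain ⟨m, rfl, hm⟩ := mem_nat_cases hzk
  obtain ⟨j, rfl, hj⟩ := mem_nat_cases hyz
  exact dmem_nat_nat.2 (hj.trans hm)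

lemma wo_nat (k : ℕ) : WO (D.nat k) := by
  classical
  refine ⟨?_, ?_, ?_, ?_⟩
  · intro a ha
    obtain ⟨j, rfl, _⟩ := mem_nat_cases ha
    simp
  · intro a b cc ha hb hc hab hbc
    obtain ⟨i, rfl, _⟩ := mem_nat_cases ha
    obtain ⟨j, rfl, _⟩ := mem_nat_cases hb
    obtain ⟨l, rfl, _⟩ := mem_nat_cases hc
    exact dmem_nat_nat.2 ((dmem_nat_nat.1 hab).trans (dmem_nat_nat.1 hbc))
  · intro a b ha hb hne
    obtain ⟨i, rfl, _⟩ := mem_nat_cases ha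
    obtain ⟨j, rfl, _⟩ := mem_nat_cases hb
    rcases Nat.lt_trichotomy i j with h | h | h
    · exact Or.inl h
    · exact absurd (by rw [h]) hne
    · exact Or.inr h
  · intro s hsub ⟨u, hu⟩
    obtain ⟨j, rfl, _⟩ := mem_nat_cases (hsub u hu)
    have hex : ∃ i, dmem (D.nat i) s := ⟨j, hu⟩
    refine ⟨D.nat (Nat.find hex), Nat.find_spec hex, ?_⟩
    intro z hz
    obtain ⟨i, rfl, _⟩ := mem_nat_cases (hsub z hz)
    intro hlt
    exact Nat.find_min hex (dmem_nat_nat.1 hlt) hz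

lemma wf_nat (n : ℕ) : WF (D.nat n) := ⟨D.nat n, trans_nat n, wo_nat n, fun _ h => h⟩

lemma wf_c : WF D.c := by
  refine ⟨D.nat 2, trans_nat 2, wo_nat 2, ?_⟩
  intro u hu
  cases u with
  | nat j => have : j = 1 := hu; simp [this]
  | c => exact absurd hu not_dmem_c_c
  | bigM => exact absurd hu not_dmem_M_any

lemma not_wf_bigM : ¬ WF D.bigM := by
  rintro ⟨y, _, ⟨_, _, hlin, _⟩, hsub⟩
  have h3 : dmem (D.nat 3) y := hsub _ dmem_nat_M
  have hc : dmem D.c y := hsub _ dmem_c_M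
  rcases hlin _ _ h3 hc (by simp) with h | h
  · exact absurd (dmem_nat_c.1 h) (by norm_num)
  · exact not_dmem_c_nat h

lemma wf_iff (x : D) : WF x ↔ dmem x D.bigM := by
  cases x with
  | nat n => simp [wf_nat n]
  | c => simp [wf_c]
  | bigM => simp [not_wf_bigM, dmem]

lemma ext_dmem : ∀ y z : D, (∀ x, dmem x y ↔ dmem x z) → y = z := by
  have natc : ∀ n : ℕ, (∀ x, dmem x (D.nat n) ↔ dmem x D.c) → False := by
    intro n h
    have h1 : 1 < n := (h (D.nat 1)).2 (by simp)
    have h0 : dmem (D.nat 0) D.c := (h (D.nat 0)).1 (by simpa using lt_trans one_pos h1)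
    simp at h0
  have natM : ∀ n : ℕ, (∀ x, dmem x (D.nat n) ↔ dmem x D.bigM) → False := by
    intro n h
    exact not_dmem_c_nat ((h D.c).2 dmem_c_M)
  have cM : (∀ x, dmem x D.c ↔ dmem x D.bigM) → False := by
    intro h
    have := (h (D.nat 0)).2 dmem_nat_M
    simp at this
  intro y z h
  cases y with
  | nat n =>
    cases z with
    | nat m =>
      rcases Nat.lt_trichotomy n m with hl | hl | hl
      · exact absurd ((h (D.nat n)).2 (by simpa using hl)) (by simp)
      · rw [hl]
      · exact absurd ((h (D.nat m)).1 (by simpa using hl)) (by simp)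
    | c => exact absurd h (by intro hh; exact natc n hh)
    | bigM => exact absurd h (by intro hh; exact natM n hh)
  | c =>
    cases z with
    | nat m => exact absurd (fun x => (h x).symm) (by intro hh; exact natc m hh)
    | c => rfl
    | bigM => exact absurd h (by intro hh; exact cM hh)
  | bigM =>
    cases z with
    | nat m => exact absurd (fun x => (h x).symm) (by intro hh; exact natM m hh)
    | c => exact absurd (fun x => (h x).symm) (by intro hh; exact cM hh)
    | bigM => rfl

lemma extAx_realize : D ⊨ extAx := by
  simp only [extAx, Sentence.Realize, Formula.Realize, BoundedFormula.realize_all,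
    BoundedFormula.realize_imp, BoundedFormula.realize_iff, BoundedFormula.realize_bdEqual,
    memF_realize, Term.realize_var, Sum.elim_inr]
  simp [Fin.snoc]
  exact fun y z h => ext_dmem y z h

lemma UC_realize : D ⊨ UCinst wellfoundedF := by
  simp only [UCinst, Sentence.Realize, Formula.Realize, BoundedFormula.realize_ex,
    BoundedFormula.realize_all, BoundedFormula.realize_iff, memF_realize, Term.realize_var,
    Sum.elim_inr, BoundedFormula.realize_liftAt_one (Nat.zero_le 1), comp_snoc_eq,
    wellfoundedF_realize]
  refine ⟨D.bigM, fun x => ?_⟩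
  simp [Fin.snoc, wf_iff]

theorem mirimanoff_set_not_paradoxical :
    (BST ∪ {UCinst wellfoundedF}).IsSatisfiable := by
  have : (BST ∪ {UCinst wellfoundedF}).Model D := by
    rw [Theory.model_iff]
    intro φ hφ
    rcases hφ with hφ | hφ
    · rw [Set.mem_singleton_iff.1 hφ]; exact extAx_realize
    · rw [Set.mem_singleton_iff.1 hφ]; exact UC_realize
  exact Theory.Model.isSatisfiable D

end SetParadox
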